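/- A partition λ is a P-position of RIT under normal play if and only if the nim-sum (λ₁ - λ₂) ⊕ (λ₃ - λ₄) ⊕ ... ⊕ (λ_{2⌈r/2⌉-1} - λ_{2⌈r/2⌉}) equals 0. -/

import Mathlib

/-- The `j`-th part (0-indexed) of a partition given as a list, `0` beyond the end. -/
def part (l : List ℕ) (j : ℕ) : ℕ := l.getD j 0

/-- A partition: a nonincreasing list of positive integers. -/
def IsPartition (l : List ℕ) : Prop :=
  l.Chain' (· ≥ ·) ∧ ∀ x ∈ l, 0 < x

/-- RIT move: replace the part at (0-indexed) position `i` by a smaller value `v`,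
keeping the sequence nonincreasing, then drop the (trailing) zeros. -/
def RitMove (l l' : List ℕ) : Prop :=
  ∃ i v, i < l.length ∧ v < part l i ∧ (l.set i v).Chain' (· ≥ ·) ∧
    l' = (l.set i v).filter (fun x => x ≠ 0)

/-- RIT move on an odd-numbered row (1-indexed), i.e. an even 0-indexed position. -/
def RitMoveOdd (l l' : List ℕ) : Prop :=
  ∃ i v, i < l.length ∧ i % 2 = 0 ∧ v < part l i ∧ (l.set i v).Chain' (· ≥ ·) ∧
    l' = (l.set i v).filter (fun x => x ≠ 0)

/-- RIT move on an even-numbered row (1-indexed), i.e. an odd 0-indexed position. -/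
def RitMoveEven (l l' : List ℕ) : Prop :=
  ∃ i v, i < l.length ∧ i % 2 = 1 ∧ v < part l i ∧ (l.set i v).Chain' (· ≥ ·) ∧
    l' = (l.set i v).filter (fun x => x ≠ 0)

/-- `core λ = (λ₂, λ₂, λ₄, λ₄, …)` (1-indexed parts), as a `0`-padded sequence. -/
def core (l : List ℕ) : ℕ → ℕ := fun j => part l (2 * (j / 2) + 1)

/-- `rem λ = (λ₁ - λ₂, λ₃ - λ₄, …)` (1-indexed parts), as a `0`-padded sequence. -/
def rem (l : List ℕ) : ℕ → ℕ := fun i => part l (2 * i) - part l (2 * i + 1)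

/-- A Nim move strictly decreases exactly one coordinate. -/
def NimMove (p q : ℕ → ℕ) : Prop := ∃ i, q i < p i ∧ ∀ j, j ≠ i → q j = p j

/-- The nim-sum (bitwise XOR) of the remnant of `l`:
`(λ₁ - λ₂) ⊕ (λ₃ - λ₄) ⊕ ⋯ ⊕ (λ_{2⌈r/2⌉-1} - λ_{2⌈r/2⌉})`. -/
def nimSum (l : List ℕ) : ℕ :=
  (List.ofFn (fun i : Fin ((l.length + 1) / 2) => rem l i)).foldr (· ^^^ ·) 0

/-- The minimal excludant of a set of naturals. -/
noncomputable def mexOf (S : Set ℕ) : ℕ := sInf {n | n ∉ S}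

/-- `G` is the (normal play) Sprague-Grundy function of RIT. -/
def IsRitGrundy (G : List ℕ → ℕ) : Prop :=
  ∀ l, IsPartition l → G l = mexOf {n | ∃ l', RitMove l l' ∧ G l' = n}

/-- `G` is the misère Grundy function of RIT (value `1` at the terminal position). -/
def IsRitMisereGrundy (G : List ℕ → ℕ) : Prop :=
  G [] = 1 ∧ ∀ l, IsPartition l → l ≠ [] →
    G l = mexOf {n | ∃ l', RitMove l l' ∧ G l' = n}

/-- `G` is the misère Grundy function of Nim on `0`-padded sequences of heaps. -/
def IsNimMisereGrundy (G : (ℕ → ℕ) → ℕ) : Prop :=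
  (∀ p : ℕ → ℕ, (∀ i, p i = 0) → G p = 1) ∧
  (∀ p : ℕ → ℕ, (Function.support p).Finite → (∃ i, p i ≠ 0) →
    G p = mexOf {n | ∃ q, NimMove p q ∧ G q = n})

/-- `P` is the set of P-positions of RIT under normal play. -/
def IsRitP (P : List ℕ → Prop) : Prop :=
  ∀ l, IsPartition l → (P l ↔ ∀ l', RitMove l l' → ¬ P l')

namespace RitAux

/-- xor of `g 0, ..., g (n-1)`. -/
def T (g : ℕ → ℕ) : ℕ → ℕ
  | 0 => 0
  | n + 1 => g n ^^^ T g n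

lemma xor_cancel4 (a s t : ℕ) : (a ^^^ s) ^^^ (a ^^^ t) = s ^^^ t := by
  rw [Nat.xor_comm a s, Nat.xor_assoc, ← Nat.xor_assoc a a t, Nat.xor_self, Nat.zero_xor]

lemma xor_rot (a b c : ℕ) : ((a ^^^ b) ^^^ c) ^^^ b = a ^^^ c := by
  rw [Nat.xor_assoc (a ^^^ b) c b, Nat.xor_comm c b, ← Nat.xor_assoc (a ^^^ b) b c,
    Nat.xor_assoc a b b, Nat.xor_self, Nat.xor_zero]

lemma xor_rot' (a b c : ℕ) : ((a ^^^ b) ^^^ c) ^^^ a = b ^^^ c := by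
  rw [Nat.xor_comm a b, xor_rot]

lemma foldr_xor (l : List ℕ) (b : ℕ) :
    l.foldr (· ^^^ ·) b = l.foldr (· ^^^ ·) 0 ^^^ b := by
  induction l with
  | nil => simp
  | cons a t ih => simp only [List.foldr_cons, ih, Nat.xor_assoc]

lemma T_eq_ofFn (g : ℕ → ℕ) (n : ℕ) :
    (List.ofFn fun i : Fin n => g i).foldr (· ^^^ ·) 0 = T g n := by
  induction n with
  | zero => rfl
  | succ n ih =>
    rw [List.ofFn_succ', List.concat_eq_append, List.foldr_append]
    simp only [List.foldr_cons, List.foldr_nil]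
    rw [foldr_xor]
    simp only [Fin.coe_castSucc, Fin.val_last, Nat.xor_zero]
    rw [ih, T, Nat.xor_comm]

lemma T_congr {g h : ℕ → ℕ} : ∀ n, (∀ i < n, g i = h i) → T g n = T h n
  | 0, _ => rfl
  | n + 1, H => by
    rw [T, T, H n (by omega), T_congr n (fun i hi => H i (by omega))]

lemma T_stable {g : ℕ → ℕ} {n : ℕ} (h0 : ∀ i, n ≤ i → g i = 0) :
    ∀ m, n ≤ m → T g m = T g n := by
  intro m hm
  induction m with
  | zero => have : n = 0 := Nat.le_zero.mp hm; subst this; rfl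
  | succ m ih =>
    rcases Nat.eq_or_lt_of_le hm with h | h
    · subst h; rfl
    · have hnm : n ≤ m := by omega
      rw [T, h0 m hnm, Nat.zero_xor, ih hnm]

lemma T_diff {g h : ℕ → ℕ} {k : ℕ} (hgh : ∀ j, j ≠ k → g j = h j) :
    ∀ n, k < n → T g n ^^^ T h n = g k ^^^ h k := by
  intro n
  induction n with
  | zero => omega
  | succ n ih =>
    intro hk
    rcases eq_or_ne k n with rfl | hne
    · have hT : T g k = T h k := T_congr k (fun i hi => hgh i (by omega))
      rw [T, T, hT, Nat.xor_comm (g k) (T h k), Nat.xor_comm (h k) (T h k), xor_cancel4]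
    · have h1 : g n = h n := hgh n (Ne.symm hne)
      rw [T, T, h1, xor_cancel4]
      exact ih (by omega)

lemma key_exists : ∀ (n : ℕ) (g : ℕ → ℕ) (y x : ℕ), x = T g n ^^^ y → x ≠ 0 →
    (∃ k < n, g k ^^^ x < g k) ∨ y ^^^ x < y := by
  intro n
  induction n with
  | zero =>
    intro g y x hx hx0
    right
    rw [T, Nat.zero_xor] at hx
    subst hx
    rw [Nat.xor_self]
    omega
  | succ n ih =>
    intro g y x hx hx0
    rw [T, Nat.xor_comm (g n) (T g n), Nat.xor_assoc] at hx
    rcases ih g (g n ^^^ y) x hx hx0 with ⟨k, hk, hlt⟩ | h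
    · exact Or.inl ⟨k, by omega, hlt⟩
    · rcases Nat.lt_xor_cases h with h1 | h2
      · left
        refine ⟨n, by omega, ?_⟩
        rwa [xor_rot (g n) y x] at h1
      · right
        rwa [xor_rot' (g n) y x] at h2

lemma exists_good (n : ℕ) (g : ℕ → ℕ) (h : T g n ≠ 0) :
    ∃ k < n, g k ^^^ T g n < g k := by
  rcases key_exists n g 0 (T g n) (by rw [Nat.xor_zero]) h with h1 | h2
  · exact h1
  · rw [Nat.zero_xor] at h2; omega

/-! ### part lemmas -/

lemma part_eq_zero_of_le {l : List ℕ} {j : ℕ} (h : l.length ≤ j) : part l j = 0 :=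
  List.getD_eq_default _ _ h

lemma lt_length_of_part_ne {l : List ℕ} {j : ℕ} (h : part l j ≠ 0) : j < l.length := by
  by_contra hc
  exact h (part_eq_zero_of_le (by omega))

lemma part_set {l : List ℕ} {i : ℕ} (hi : i < l.length) (v j : ℕ) :
    part (l.set i v) j = if j = i then v else part l j := by
  unfold part
  simp only [List.getD_eq_getElem?_getD, List.getElem?_set]
  rcases eq_or_ne j i with rfl | hne
  · simp [hi]
  · simp [Ne.symm hne, hne]

lemma part_anti {l : List ℕ} (hc : l.Chain' (· ≥ ·)) {j k : ℕ} (hjk : j ≤ k) :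
    part l k ≤ part l j := by
  rcases lt_or_ge k l.length with hk | hk
  · have hj : j < l.length := lt_of_le_of_lt hjk hk
    rcases eq_or_lt_of_le hjk with rfl | hlt
    · exact le_refl _
    · have hp : List.Pairwise (· ≥ ·) l := List.isChain_iff_pairwise.mp hc
      have := List.pairwise_iff_getElem.mp hp j k hj hk hlt
      rw [part, part, List.getD_eq_getElem _ _ hj, List.getD_eq_getElem _ _ hk]
      exact this
  · rw [part, List.getD_eq_default _ _ hk]
    exact Nat.zero_le _

lemma part_filter {m : List ℕ} (hc : m.Chain' (· ≥ ·)) (j : ℕ) :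
    part (m.filter (fun x => x ≠ 0)) j = part m j := by
  induction m generalizing j with
  | nil => simp
  | cons a t ih =>
    by_cases ha : a = 0
    · subst ha
      have hall : ∀ x ∈ (0 : ℕ) :: t, x = 0 := by
        intro x hx
        have hp : List.Pairwise (· ≥ ·) ((0 : ℕ) :: t) := List.isChain_iff_pairwise.mp hc
        rcases List.mem_cons.mp hx with rfl | hx
        · rfl
        · exact Nat.le_zero.mp ((List.pairwise_cons.mp hp).1 x hx)
      have hnil : ((0 : ℕ) :: t).filter (fun x => x ≠ 0) = [] := by
        rw [List.filter_eq_nil_iff]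
        intro a ha
        simpa using hall a ha
      rw [hnil]
      have h2 : part (0 :: t) j = 0 := by
        rcases lt_or_ge j ((0 : ℕ) :: t).length with hj | hj
        · rw [part, List.getD_eq_getElem _ _ hj]
          exact hall _ (List.getElem_mem hj)
        · exact part_eq_zero_of_le hj
      rw [h2]
      simp [part]
    · have hfil : (a :: t).filter (fun x => x ≠ 0) = a :: t.filter (fun x => x ≠ 0) := by
        simp [List.filter_cons, ha]
      rw [hfil]
      cases j with
      | zero => rfl
      | succ j =>
        have : part (a :: t.filter (fun x => x ≠ 0)) (j + 1)
            = part (t.filter (fun x => x ≠ 0)) j := by simp [part]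
        rw [this, ih hc.tail]
        simp [part]

lemma chain'_set {l : List ℕ} (hc : l.Chain' (· ≥ ·)) {i v : ℕ} (hi : i < l.length)
    (hprev : ∀ j, j + 1 = i → v ≤ part l j) (hnext : part l (i + 1) ≤ v) :
    (l.set i v).Chain' (· ≥ ·) := by
  unfold List.Chain' at hc ⊢
  rw [List.isChain_iff_getElem] at hc ⊢
  intro j hj
  simp only [List.length_set] at hj
  simp only [List.get_eq_getElem, List.length_set, List.getElem_set]
  have hj1 : j + 1 < l.length := by omega
  rcases eq_or_ne i j with rfl | hji
  · rw [if_pos rfl, if_neg (by omega)]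
    calc l[i + 1] = part l (i + 1) := (List.getD_eq_getElem _ _ hj1).symm
    _ ≤ v := hnext
  · rcases eq_or_ne i (j + 1) with hji1 | hji1
    · rw [if_neg hji, if_pos hji1]
      calc v ≤ part l j := hprev j hji1.symm
      _ = l[j]'(by omega) := List.getD_eq_getElem _ _ (by omega)
    · rw [if_neg hji, if_neg hji1]
      have := hc j (by omega)
      simpa using this

lemma rem_eq_zero {l : List ℕ} {j : ℕ} (hj : (l.length + 1) / 2 ≤ j) : rem l j = 0 := by
  unfold rem
  rw [part_eq_zero_of_le (by omega)]
  exact Nat.zero_sub _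

lemma nimSum_eq_T (l : List ℕ) {n : ℕ} (hn : (l.length + 1) / 2 ≤ n) :
    nimSum l = T (rem l) n := by
  rw [nimSum, T_eq_ofFn, T_stable (fun i hi => rem_eq_zero hi) n hn]

/-! ### move lemmas -/

section Move

variable {l l' : List ℕ} {i v : ℕ}
  (hi : i < l.length) (hv : v < part l i)
  (hc' : (l.set i v).Chain' (· ≥ ·))
  (hl' : l' = (l.set i v).filter (fun x => x ≠ 0))

include hi hc' hl'

lemma move_part (j : ℕ) : part l' j = if j = i then v else part l j := by
  rw [hl', part_filter hc', part_set hi]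

lemma move_len : l'.length ≤ l.length := by
  rw [hl']
  calc ((l.set i v).filter (fun x => x ≠ 0)).length ≤ (l.set i v).length :=
    List.length_filter_le _ _
  _ = l.length := List.length_set ..

lemma move_partition (hl : IsPartition l) : IsPartition l' := by
  constructor
  · rw [hl']
    exact List.isChain_iff_pairwise.mpr ((List.isChain_iff_pairwise.mp hc').filter _)
  · intro x hx
    rw [hl'] at hx
    have := List.of_mem_filter hx
    simp only [ne_eq, decide_not, Bool.not_eq_true', decide_eq_false_iff_not] at this
    omega

include hv in
lemma move_sum : l'.sum < l.sum := by
  have hle : l'.sum ≤ (l.set i v).sum := by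
    rw [hl']
    exact List.Sublist.sum_le_sum List.filter_sublist (by intro x _; exact Nat.zero_le x)
  have h1 := List.sum_set l i v
  have h2 : l.sum = (l.take i).sum + (l.drop i).sum := by
    rw [← List.sum_append, List.take_append_drop]
  have h3 : l.drop i = l[i] :: l.drop (i + 1) := List.drop_eq_getElem_cons hi
  have h4 : part l i = l[i] := List.getD_eq_getElem _ _ hi
  rw [h3, List.sum_cons] at h2
  simp only [if_pos hi] at h1
  omega

lemma move_rem_ne (j : ℕ) (hj : j ≠ i / 2) : rem l' j = rem l j := by
  have h1 : 2 * j ≠ i := by omega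
  have h2 : 2 * j + 1 ≠ i := by omega
  unfold rem
  rw [move_part hi hc' hl', move_part hi hc' hl', if_neg h1, if_neg h2]

include hv in
lemma move_rem_k (hchain : l.Chain' (· ≥ ·)) : rem l' (i / 2) ≠ rem l (i / 2) := by
  rcases Nat.even_or_odd i with he | ho
  · have hk : i = 2 * (i / 2) := by
      rcases he with ⟨r, hr⟩; omega
    set k := i / 2 with hkdef
    have hb : part l (2 * k + 1) ≤ v := by
      have := part_anti hc' (Nat.le_succ (2 * k))
      rwa [part_set hi, part_set hi, if_pos hk.symm, if_neg (by omega)] at this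
    have hrl' : rem l' k = v - part l (2 * k + 1) := by
      unfold rem
      rw [move_part hi hc' hl', move_part hi hc' hl', if_pos hk.symm, if_neg (by omega)]
    have hrl : rem l k = part l i - part l (2 * k + 1) := by
      unfold rem; rw [← hk]
    omega
  · have hk : i = 2 * (i / 2) + 1 := by
      rcases ho with ⟨r, hr⟩; omega
    set k := i / 2 with hkdef
    have hba : part l (2 * k + 1) ≤ part l (2 * k) := part_anti hchain (Nat.le_succ _)
    have hrl' : rem l' k = part l (2 * k) - v := by
      unfold rem
      rw [move_part hi hc' hl', move_part hi hc' hl', if_neg (by omega), if_pos hk.symm]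
    have hrl : rem l k = part l (2 * k) - part l i := by
      unfold rem; rw [← hk]
    have hpi : part l i = part l (2 * k + 1) := by rw [hk]
    omega

include hv in
lemma move_nimSum_xor (hchain : l.Chain' (· ≥ ·)) :
    nimSum l ^^^ nimSum l' = rem l (i / 2) ^^^ rem l' (i / 2) ∧
      rem l (i / 2) ≠ rem l' (i / 2) := by
  have hlen := move_len hi hc' hl'
  have h1 : nimSum l = T (rem l) (l.length + 1) := nimSum_eq_T l (by omega)
  have h2 : nimSum l' = T (rem l') (l.length + 1) := nimSum_eq_T l' (by omega)
  have hk : i / 2 < l.length + 1 := by omega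
  have hd : ∀ j, j ≠ i / 2 → rem l j = rem l' j :=
    fun j hj => (move_rem_ne hi hc' hl' j hj).symm
  exact ⟨by rw [h1, h2]; exact T_diff hd _ hk,
    fun h => move_rem_k hi hv hc' hl' hchain h.symm⟩

end Move

lemma exists_move {l : List ℕ} (hl : IsPartition l) (hx : nimSum l ≠ 0) :
    ∃ l', RitMove l l' ∧ nimSum l' = 0 := by
  have hxT : nimSum l = T (rem l) ((l.length + 1) / 2) := nimSum_eq_T l le_rfl
  obtain ⟨k, hk, hlt⟩ := exists_good ((l.length + 1) / 2) (rem l) (by rw [← hxT]; exact hx)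
  rw [← hxT] at hlt
  have hba : part l (2 * k + 1) ≤ part l (2 * k) := part_anti hl.1 (Nat.le_succ _)
  have hrl : rem l k = part l (2 * k) - part l (2 * k + 1) := rfl
  have hrpos : 0 < rem l k := by omega
  have ha : part l (2 * k) ≠ 0 := by omega
  have h2k : 2 * k < l.length := lt_length_of_part_ne ha
  set w := rem l k ^^^ nimSum l with hw
  set v := part l (2 * k + 1) + w with hvdef
  have hva : v < part l (2 * k) := by omega
  have hcs : (l.set (2 * k) v).Chain' (· ≥ ·) := by
    refine chain'_set hl.1 h2k (fun j hj => ?_) (by omega)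
    have := part_anti hl.1 (show j ≤ 2 * k by omega)
    omega
  refine ⟨(l.set (2 * k) v).filter (fun x => x ≠ 0), ⟨2 * k, v, h2k, hva, hcs, rfl⟩, ?_⟩
  set l' := (l.set (2 * k) v).filter (fun x => x ≠ 0) with hl'
  have hkk : (2 * k) / 2 = k := by omega
  obtain ⟨hxor, -⟩ := move_nimSum_xor h2k hva hcs hl' hl.1
  rw [hkk] at hxor
  have hremk : rem l' k = w := by
    unfold rem
    rw [move_part h2k hcs hl', move_part h2k hcs hl', if_pos rfl, if_neg (by omega)]
    omega
  rw [hremk] at hxor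
  have hxx : rem l k ^^^ w = nimSum l := by
    rw [hw, ← Nat.xor_assoc, Nat.xor_self, Nat.zero_xor]
  rw [hxx] at hxor
  have : nimSum l' = (nimSum l ^^^ nimSum l) ^^^ nimSum l' := by
    rw [Nat.xor_self, Nat.zero_xor]
  rw [this, Nat.xor_assoc, hxor, Nat.xor_self]

end RitAux


open RitAux

/-- `λ` is a P-position of RIT under normal play iff the nim-sum of
its remnant is zero. -/
theorem stmt_7 (P : List ℕ → Prop) (hP : IsRitP P) (l : List ℕ)
    (hl : IsPartition l) : P l ↔ nimSum l = 0 := by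
  suffices h : ∀ n (l : List ℕ), l.sum = n → IsPartition l → (P l ↔ nimSum l = 0) from
    h _ l rfl hl
  intro n
  induction n using Nat.strong_induction_on with
  | _ n IH =>
    intro l hsum hl
    constructor
    · intro hPl
      by_contra hx
      obtain ⟨l', hmv, hl'0⟩ := exists_move hl hx
      obtain ⟨i, v, hi, hv, hc', hleq⟩ := hmv
      have hpart' := move_partition hi hc' hleq hl
      have hsum' : l'.sum < n := hsum ▸ move_sum hi hv hc' hleq
      have hPl' : P l' := (IH _ hsum' _ rfl hpart').mpr hl'0
      exact (hP l hl).mp hPl l' ⟨i, v, hi, hv, hc', hleq⟩ hPl'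
    · intro hx
      apply (hP l hl).mpr
      intro l' hmv
      obtain ⟨i, v, hi, hv, hc', hleq⟩ := hmv
      obtain ⟨hxor, hne⟩ := move_nimSum_xor hi hv hc' hleq hl.1
      have hne' : nimSum l' ≠ 0 := by
        intro h0
        rw [hx, h0, Nat.xor_self] at hxor
        exact hne (Nat.xor_eq_zero_iff.mp hxor.symm)
      rw [IH _ (hsum ▸ move_sum hi hv hc' hleq) _ rfl (move_partition hi hc' hleq hl)]
      exact hne'
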